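/- Let F be a free group of rank k ≥ 2 and let Y ⊆ F be a subset whose strict annular density δ exists. Then liminf_{n→∞} ρ(n,Y)/ρ(n,F) ≥ (4k−4)/(2k−1)² · δ and limsup_{n→∞} ρ(n,Y)/ρ(n,F) ≤ 1 − (4k−4)/(2k−1)² · (1−δ), where ρ(n,X) = #{w ∈ X : |w| ≤ n}. -/

import Mathlib

set_option maxHeartbeats 1000000

open Filter

namespace BDAux

variable {k : ℕ}

abbrev β (k : ℕ) := Fin k × Bool

/-- adjacency relation characterizing reduced words -/
def R (a b : β k) : Prop := ¬(a.1 = b.1 ∧ a.2 = !b.2)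

lemma chain'_reduce (l : List (β k)) : List.Chain' R (FreeGroup.reduce l) := by
  induction l with
  | nil => exact List.isChain_nil
  | cons x L ih =>
    rw [FreeGroup.reduce.cons]
    rcases h : FreeGroup.reduce L with _ | ⟨hd, tl⟩
    · exact List.isChain_singleton _
    · rw [h] at ih
      by_cases hc : x.1 = hd.1 ∧ x.2 = !hd.2
      · simpa [hc, List.Chain'] using ih.tail
      · simp only [hc, if_false]; exact List.isChain_cons_cons.mpr ⟨hc, ih⟩

lemma reduce_eq_self : ∀ {l : List (β k)}, List.Chain' R l → FreeGroup.reduce l = l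
  | [] => fun _ => rfl
  | [a] => fun _ => FreeGroup.reduce_singleton a
  | a :: b :: t => fun h => by
    have h1 : R a b := (List.isChain_cons_cons.mp h).1
    have h2 := (List.isChain_cons_cons.mp h).2
    rw [FreeGroup.reduce.cons, reduce_eq_self h2]
    exact if_neg h1

lemma chain'_toWord (w : FreeGroup (Fin k)) : List.Chain' R (FreeGroup.toWord w) := by
  rw [← FreeGroup.reduce_toWord]; exact chain'_reduce _

/-- reduced words of length n -/
def T (k n : ℕ) : Type := {l : List (β k) // List.Chain' R l ∧ l.length = n}

instance (n : ℕ) : Finite (T k n) := by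
  have : Finite {l : List (β k) // l.length = n} :=
    (List.finite_length_eq (β k) n).to_subtype
  exact Finite.of_injective (fun t : T k n => (⟨t.1, t.2.2⟩ : {l : List (β k) // l.length = n}))
    (fun a b h => Subtype.ext (Subtype.mk_eq_mk.mp h))

instance (X : Set (FreeGroup (Fin k))) (n : ℕ) :
    Finite {w : FreeGroup (Fin k) // w ∈ X ∧ (FreeGroup.toWord w).length = n} := by
  have : Finite {l : List (β k) // l.length = n} :=
    (List.finite_length_eq (β k) n).to_subtype
  exact Finite.of_injective
    (fun w : {w : FreeGroup (Fin k) // w ∈ X ∧ (FreeGroup.toWord w).length = n} =>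
      (⟨FreeGroup.toWord w.1, w.2.2⟩ : {l : List (β k) // l.length = n}))
    (fun a b h => Subtype.ext (FreeGroup.toWord_injective (Subtype.mk_eq_mk.mp h)))

instance (X : Set (FreeGroup (Fin k))) (n : ℕ) :
    Finite {w : FreeGroup (Fin k) // w ∈ X ∧ (FreeGroup.toWord w).length ≤ n} := by
  have : Finite {l : List (β k) // l.length ≤ n} :=
    (List.finite_length_le (β k) n).to_subtype
  exact Finite.of_injective
    (fun w : {w : FreeGroup (Fin k) // w ∈ X ∧ (FreeGroup.toWord w).length ≤ n} =>
      (⟨FreeGroup.toWord w.1, w.2.2⟩ : {l : List (β k) // l.length ≤ n}))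
    (fun a b h => Subtype.ext (FreeGroup.toWord_injective (Subtype.mk_eq_mk.mp h)))

lemma card_univ_eq_T (n : ℕ) :
    Nat.card {w : FreeGroup (Fin k) // w ∈ (Set.univ : Set (FreeGroup (Fin k))) ∧
      (FreeGroup.toWord w).length = n} = Nat.card (T k n) := by
  apply Nat.card_congr
  refine ⟨fun w => ⟨FreeGroup.toWord w.1, chain'_toWord _, w.2.2⟩,
    fun t => ⟨FreeGroup.mk t.1, trivial,
      by rw [FreeGroup.toWord_mk, reduce_eq_self t.2.1]; exact t.2.2⟩,
    fun w => Subtype.ext (by simp [FreeGroup.mk_toWord]),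
    fun t => Subtype.ext (by simp [FreeGroup.toWord_mk, reduce_eq_self t.2.1])⟩

lemma card_T_zero : Nat.card (T k 0) = 1 := by
  have : Unique (T k 0) := by
    refine ⟨⟨⟨[], List.isChain_nil, rfl⟩⟩, ?_⟩
    rintro ⟨l, hc, hl⟩
    apply Subtype.ext
    simpa using List.length_eq_zero_iff.mp hl
  exact Nat.card_unique

lemma card_T_one : Nat.card (T k 1) = 2 * k := by
  have h : Nat.card (β k) = Nat.card (T k 1) := by
    apply Nat.card_congr
    apply Equiv.ofBijective (fun a : β k => (⟨[a], List.isChain_singleton a, rfl⟩ : T k 1))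
    constructor
    · intro a b hab
      simpa using Subtype.mk_eq_mk.mp hab
    · rintro ⟨l, hc, hl⟩
      obtain ⟨a, rfl⟩ := List.length_eq_one_iff.mp hl
      exact ⟨a, rfl⟩
  rw [← h, Nat.card_prod, Nat.card_eq_fintype_card, Nat.card_eq_fintype_card]
  simp [mul_comm]

def inv (b : β k) : β k := (b.1, !b.2)

lemma R_iff (a b : β k) : R a b ↔ a ≠ inv b := by
  simp [R, inv, Prod.ext_iff]

lemma card_T_step (hk : 0 < k) (n : ℕ) :
    Nat.card (T k (n + 2)) = (2 * k - 1) * Nat.card (T k (n + 1)) := by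
  letI : Inhabited (β k) := ⟨(⟨0, hk⟩, true)⟩
  set z₀ : β k := (⟨0, hk⟩, true) with hz₀
  have e1 : T k (n+2) ≃ Σ t : T k (n+1), {a : β k // a ≠ inv t.1.headI} := by
    refine ⟨fun t => ⟨⟨t.1.tail, t.2.1.tail, by simp [t.2.2]⟩, ⟨t.1.headI, ?_⟩⟩,
      fun p => ⟨p.2.1 :: p.1.1, ?_, by simp [p.1.2.2]⟩, ?_, ?_⟩
    · obtain ⟨l, hc, hl⟩ := t
      rcases l with _ | ⟨a, _ | ⟨b, s⟩⟩
      · simp at hl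
      · simp at hl
      · simpa using (R_iff a b).mp (List.isChain_cons_cons.mp hc).1
    · obtain ⟨⟨l, hc, hl⟩, ⟨a, ha⟩⟩ := p
      rcases l with _ | ⟨b, s⟩
      · simp at hl
      · exact List.isChain_cons_cons.mpr ⟨(R_iff a b).mpr (by simpa using ha), hc⟩
    · rintro ⟨l, hc, hl⟩
      rcases l with _ | ⟨a, l⟩
      · simp at hl
      · rfl
    · rintro ⟨⟨l, hc, hl⟩, ⟨a, ha⟩⟩
      rcases l with _ | ⟨b, s⟩
      · simp at hl
      · rfl
  have e2 : (Σ t : T k (n+1), {a : β k // a ≠ inv t.1.headI}) ≃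
      (T k (n+1)) × {a : β k // a ≠ z₀} := by
    refine (Equiv.sigmaCongrRight fun t =>
      (Equiv.swap (inv t.1.headI) z₀).subtypeEquiv (q := fun b => b ≠ z₀)
        fun a => ?_).trans (Equiv.sigmaEquivProd _ _)
    exact ⟨fun h hc => h ((Equiv.swap _ z₀).injective
        (hc.trans (Equiv.swap_apply_left _ z₀).symm)),
      fun h hc => h (by rw [hc, Equiv.swap_apply_left])⟩
  rw [Nat.card_congr (e1.trans e2), Nat.card_prod]
  have hcz : Nat.card {a : β k // a ≠ z₀} = 2 * k - 1 := by
    rw [Nat.card_eq_fintype_card, Fintype.card_subtype_compl, Fintype.card_subtype_eq]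
    simp [mul_comm]
  rw [hcz, mul_comm]

lemma card_split (X : Set (FreeGroup (Fin k))) (n : ℕ) :
    Nat.card {w : FreeGroup (Fin k) // w ∈ X ∧ (FreeGroup.toWord w).length ≤ n + 1} =
      Nat.card {w : FreeGroup (Fin k) // w ∈ X ∧ (FreeGroup.toWord w).length ≤ n} +
      Nat.card {w : FreeGroup (Fin k) // w ∈ X ∧ (FreeGroup.toWord w).length = n + 1} := by
  rw [← Nat.card_sum]
  apply Nat.card_congr
  apply Equiv.symm
  apply Equiv.ofBijective (f := Sum.elim
    (fun w : {w : FreeGroup (Fin k) // w ∈ X ∧ (FreeGroup.toWord w).length ≤ n} =>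
      (⟨w.1, w.2.1, Nat.le_succ_of_le w.2.2⟩ :
        {w : FreeGroup (Fin k) // w ∈ X ∧ (FreeGroup.toWord w).length ≤ n + 1}))
    (fun w => ⟨w.1, w.2.1, le_of_eq w.2.2⟩))
  constructor
  · rintro (⟨a, ha1, ha2⟩ | ⟨a, ha1, ha2⟩) (⟨b, hb1, hb2⟩ | ⟨b, hb1, hb2⟩) h <;>
      simp only [Sum.elim_inl, Sum.elim_inr, Subtype.mk.injEq] at h <;> subst h
    · rfl
    · omega
    · omega
    · rfl
  · rintro ⟨w, hw, hlen⟩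
    by_cases h : (FreeGroup.toWord w).length ≤ n
    · exact ⟨Sum.inl ⟨w, hw, h⟩, rfl⟩
    · exact ⟨Sum.inr ⟨w, hw, by omega⟩, rfl⟩

lemma card_ball_zero (X : Set (FreeGroup (Fin k))) :
    Nat.card {w : FreeGroup (Fin k) // w ∈ X ∧ (FreeGroup.toWord w).length ≤ 0} =
    Nat.card {w : FreeGroup (Fin k) // w ∈ X ∧ (FreeGroup.toWord w).length = 0} := by
  apply Nat.card_congr
  exact Equiv.subtypeEquivRight fun w => by simp [Nat.le_zero]

lemma card_sphere_mono (X : Set (FreeGroup (Fin k))) (n : ℕ) :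
    Nat.card {w : FreeGroup (Fin k) // w ∈ X ∧ (FreeGroup.toWord w).length = n} ≤
    Nat.card {w : FreeGroup (Fin k) // w ∈ (Set.univ : Set (FreeGroup (Fin k))) ∧
      (FreeGroup.toWord w).length = n} :=
  Nat.card_le_card_of_injective (fun w => ⟨w.1, trivial, w.2.2⟩)
    (fun a b h => Subtype.ext (Subtype.mk_eq_mk.mp h))

lemma card_ball_mono (X : Set (FreeGroup (Fin k))) (n : ℕ) :
    Nat.card {w : FreeGroup (Fin k) // w ∈ X ∧ (FreeGroup.toWord w).length ≤ n} ≤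
    Nat.card {w : FreeGroup (Fin k) // w ∈ (Set.univ : Set (FreeGroup (Fin k))) ∧
      (FreeGroup.toWord w).length ≤ n} :=
  Nat.card_le_card_of_injective (fun w => ⟨w.1, trivial, w.2.2⟩)
    (fun a b h => Subtype.ext (Subtype.mk_eq_mk.mp h))

end BDAux
open Filter BDAux

theorem ball_density_bounds_of_annular (k : ℕ) (hk : 2 ≤ k) (Y : Set (FreeGroup (Fin k))) (δ : ℝ)
    (γ : Set (FreeGroup (Fin k)) → ℕ → ℝ)
    (hγ : ∀ X n, γ X n = (Nat.card {w : FreeGroup (Fin k) // w ∈ X ∧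
        (FreeGroup.toWord w).length = n} : ℝ))
    (ρ : Set (FreeGroup (Fin k)) → ℕ → ℝ)
    (hρ : ∀ X n, ρ X n = (Nat.card {w : FreeGroup (Fin k) // w ∈ X ∧
        (FreeGroup.toWord w).length ≤ n} : ℝ))
    (hann : Tendsto (fun n : ℕ =>
        (1 / 2) * (γ Y (n - 1) / γ Set.univ (n - 1) + γ Y n / γ Set.univ n))
      atTop (nhds δ)) :
    ((4 * k - 4 : ℝ) / (2 * k - 1) ^ 2) * δ ≤
        Filter.liminf (fun n : ℕ => ρ Y n / ρ Set.univ n) atTop ∧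
    Filter.limsup (fun n : ℕ => ρ Y n / ρ Set.univ n) atTop ≤
        1 - ((4 * k - 4 : ℝ) / (2 * k - 1) ^ 2) * (1 - δ) := by
  have hk0 : 0 < k := by omega
  have hkR : (2 : ℝ) ≤ (k : ℝ) := by exact_mod_cast hk
  have hq2 : (0 : ℝ) < (2 * (k : ℝ) - 1) ^ 2 := by nlinarith
  -- basic positivity facts
  have hγ0 : ∀ X n, 0 ≤ γ X n := fun X n => by rw [hγ]; positivity
  have hρ0 : ∀ X n, 0 ≤ ρ X n := fun X n => by rw [hρ]; positivity
  have hγle : ∀ n, γ Y n ≤ γ Set.univ n := fun n => by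
    rw [hγ, hγ]; exact_mod_cast card_sphere_mono Y n
  have hρle : ∀ n, ρ Y n ≤ ρ Set.univ n := fun n => by
    rw [hρ, hρ]; exact_mod_cast card_ball_mono Y n
  have hsplit : ∀ X n, ρ X (n + 1) = ρ X n + γ X (n + 1) := fun X n => by
    rw [hρ, hρ, hγ]; exact_mod_cast card_split X n
  have hρzero : ∀ X, ρ X 0 = γ X 0 := fun X => by
    rw [hρ, hγ]; exact_mod_cast card_ball_zero X
  -- values of γ on univ
  have hc0 : γ Set.univ 0 = 1 := by
    rw [hγ, card_univ_eq_T, card_T_zero]; norm_num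
  have hc1 : γ Set.univ 1 = 2 * (k : ℝ) := by
    rw [hγ, card_univ_eq_T, card_T_one]; push_cast; ring
  have hcs : ∀ n, γ Set.univ (n + 2) = (2 * (k : ℝ) - 1) * γ Set.univ (n + 1) := fun n => by
    rw [hγ, hγ, card_univ_eq_T, card_univ_eq_T, card_T_step hk0]
    push_cast [Nat.cast_sub (by omega : 1 ≤ 2 * k)]
    ring
  have hcpos' : ∀ n, 0 < γ Set.univ n ∧ 0 < γ Set.univ (n + 1) := by
    intro n
    induction n with
    | zero => exact ⟨by rw [hc0]; norm_num, by rw [hc1]; linarith⟩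
    | succ n ih => exact ⟨ih.2, by rw [hcs]; nlinarith [ih.2]⟩
  have hcpos : ∀ n, 0 < γ Set.univ n := fun n => (hcpos' n).1
  have hcmono : ∀ n, γ Set.univ n ≤ γ Set.univ (n + 1) := by
    intro n
    cases n with
    | zero => rw [hc0, hc1]; linarith
    | succ n => rw [hcs]; nlinarith [hcpos (n + 1)]
  have hρpos : ∀ n, 0 < ρ Set.univ n := by
    intro n
    induction n with
    | zero => rw [hρzero]; exact hcpos 0
    | succ n ih => rw [hsplit]; have := hγ0 Set.univ (n + 1); linarith
  -- the key counting inequality: (2k-2) ρF(m+2) ≤ (2k-1)² γF(m+1)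
  have hPb : ∀ m, (2 * (k : ℝ) - 2) * ρ Set.univ (m + 2) ≤
      (2 * (k : ℝ) - 1) ^ 2 * γ Set.univ (m + 1) := by
    intro m
    induction m with
    | zero =>
      have e2 : ρ Set.univ 2 = γ Set.univ 0 + γ Set.univ 1 + γ Set.univ 2 := by
        rw [hsplit Set.univ 1, hsplit Set.univ 0, hρzero]
      rw [e2, hcs 0, hc0, hc1]
      nlinarith [hkR, sq_nonneg ((k:ℝ) - 2)]
    | succ m ih =>
      have h3 : γ Set.univ (m + 3) =
          (2 * (k : ℝ) - 1) * ((2 * (k : ℝ) - 1) * γ Set.univ (m + 1)) := by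
        rw [show m + 3 = (m + 1) + 2 from rfl, hcs (m + 1), hcs m]
      have e3 : ρ Set.univ (m + 3) = ρ Set.univ (m + 2) + γ Set.univ (m + 3) :=
        hsplit Set.univ (m + 2)
      rw [show m + 1 + 2 = m + 3 from rfl, e3, h3,
        show m + 1 + 1 = m + 2 from rfl, hcs m]
      linarith only [ih, hcpos (m + 1)]
  set K : ℝ := (4 * (k : ℝ) - 4) / (2 * (k : ℝ) - 1) ^ 2 with hKdef
  set b : ℕ → ℝ := fun n =>
    (1 / 2) * (γ Y (n - 1) / γ Set.univ (n - 1) + γ Y n / γ Set.univ n) with hbdef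
  have hK0 : 0 ≤ K := div_nonneg (by linarith) hq2.le
  have hb0 : ∀ n, 0 ≤ b n := fun n => by
    have := div_nonneg (hγ0 Y (n - 1)) (hcpos (n - 1)).le
    have := div_nonneg (hγ0 Y n) (hcpos n).le
    simp only [hbdef]; linarith
  have hb1 : ∀ n, b n ≤ 1 := fun n => by
    have h1 := (div_le_one (hcpos (n - 1))).mpr (hγle (n - 1))
    have h2 := (div_le_one (hcpos n)).mpr (hγle n)
    simp only [hbdef]; linarith
  -- the pointwise bounds for n ≥ 2
  have hmain : ∀ n, 2 ≤ n →
      K * b n ≤ ρ Y n / ρ Set.univ n ∧ ρ Y n / ρ Set.univ n ≤ 1 - K * (1 - b n) := by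
    intro n hn
    obtain ⟨m, rfl⟩ : ∃ m, n = m + 2 := ⟨n - 2, by omega⟩
    have hbm : b (m + 2) =
        (1 / 2) * (γ Y (m + 1) / γ Set.univ (m + 1) + γ Y (m + 2) / γ Set.univ (m + 2)) := rfl
    have s1 : ρ Y (m + 2) = ρ Y (m + 1) + γ Y (m + 2) := hsplit Y (m + 1)
    have s2 : ρ Y (m + 1) = ρ Y m + γ Y (m + 1) := hsplit Y m
    have s3 : ρ Set.univ (m + 2) = ρ Set.univ (m + 1) + γ Set.univ (m + 2) :=
      hsplit Set.univ (m + 1)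
    have s4 : ρ Set.univ (m + 1) = ρ Set.univ m + γ Set.univ (m + 1) := hsplit Set.univ m
    set A := γ Y (m + 1) with hA
    set B := γ Y (m + 2) with hB
    set CA := γ Set.univ (m + 1) with hCA
    set CB := γ Set.univ (m + 2) with hCB
    set P := ρ Set.univ (m + 2) with hP
    set RY := ρ Y (m + 2) with hRY
    have hCApos : 0 < CA := hcpos (m + 1)
    have hCBpos : 0 < CB := hcpos (m + 2)
    have hPpos : 0 < P := hρpos (m + 2)
    have hCACB : CA ≤ CB := hcmono (m + 1)
    have hA0 : 0 ≤ A := hγ0 Y (m + 1)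
    have hB0 : 0 ≤ B := hγ0 Y (m + 2)
    have hAC : A ≤ CA := hγle (m + 1)
    have hBC : B ≤ CB := hγle (m + 2)
    have hPB : (2 * (k : ℝ) - 2) * P ≤ (2 * (k : ℝ) - 1) ^ 2 * CA := hPb m
    have hRY1 : A + B ≤ RY := by
      have := hρ0 Y m
      linarith [s1, s2]
    have hRY2 : RY + (CA - A) + (CB - B) ≤ P := by
      have := hρle m
      linarith [s1, s2, s3, s4]
    -- introduce the ratios
    set u := A / CA with hu
    set v := B / CB with hv
    have hAu : A = u * CA := by rw [hu, div_mul_cancel₀ _ hCApos.ne']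
    have hBv : B = v * CB := by rw [hv, div_mul_cancel₀ _ hCBpos.ne']
    have hu0 : 0 ≤ u := div_nonneg hA0 hCApos.le
    have hv0 : 0 ≤ v := div_nonneg hB0 hCBpos.le
    have hu1 : u ≤ 1 := (div_le_one hCApos).mpr hAC
    have hv1 : v ≤ 1 := (div_le_one hCBpos).mpr hBC
    rw [hAu, hBv] at hRY1 hRY2
    have hbm2 : b (m + 2) = (1 / 2) * (u + v) := hbm
    have hRYpos : 0 ≤ RY := hρ0 Y (m + 2)
    constructor
    · -- lower bound
      have key1 : K * ((1 / 2) * (u + v)) * P ≤ RY := by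
        have hrw : K * ((1 / 2) * (u + v)) * P =
            (4 * (k : ℝ) - 4) * ((1 / 2) * (u + v)) * P / (2 * (k : ℝ) - 1) ^ 2 := by
          rw [hKdef]; ring
        rw [hrw, div_le_iff₀ hq2]
        have h1 := mul_le_mul_of_nonneg_left hPB hu0
        have h2 := mul_le_mul_of_nonneg_left hPB hv0
        have h3 := mul_le_mul_of_nonneg_left hRY1 hq2.le
        have h4 := mul_le_mul_of_nonneg_left hCACB (mul_nonneg hv0 hq2.le)
        linarith only [h1, h2, h3, h4]
      rw [hbm2, le_div_iff₀ hPpos]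
      linarith only [key1]
    · -- upper bound
      have hu0' : (0 : ℝ) ≤ 1 - u := by linarith
      have hv0' : (0 : ℝ) ≤ 1 - v := by linarith
      have key2 : K * (1 - (1 / 2) * (u + v)) * P ≤ P - RY := by
        have hrw : K * (1 - (1 / 2) * (u + v)) * P =
            (4 * (k : ℝ) - 4) * (1 - (1 / 2) * (u + v)) * P / (2 * (k : ℝ) - 1) ^ 2 := by
          rw [hKdef]; ring
        rw [hrw, div_le_iff₀ hq2]
        have h1 := mul_le_mul_of_nonneg_left hPB hu0'
        have h2 := mul_le_mul_of_nonneg_left hPB hv0'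
        have h3 := mul_le_mul_of_nonneg_left hRY2 hq2.le
        have h4 := mul_le_mul_of_nonneg_left hCACB (mul_nonneg hv0' hq2.le)
        linarith only [h1, h2, h3, h4]
      rw [hbm2, div_le_iff₀ hPpos]
      linarith only [key2]
  -- pass to liminf / limsup
  have hgoalK : ((4 * (k : ℕ) - 4 : ℝ) / (2 * (k : ℕ) - 1) ^ 2) = K := rfl
  constructor
  · have ht1 : Tendsto (fun n => K * b n) atTop (nhds (K * δ)) := hann.const_mul K
    have hco : IsBoundedUnder (· ≥ ·) atTop (fun n => K * b n) :=
      isBoundedUnder_of ⟨0, fun n => mul_nonneg hK0 (hb0 n)⟩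
    have hbd : IsCoboundedUnder (· ≥ ·) atTop (fun n : ℕ => ρ Y n / ρ Set.univ n) :=
      isCoboundedUnder_ge_of_le atTop (x := 1) fun n =>
        (div_le_one (hρpos n)).mpr (hρle n)
    have hev : ∀ᶠ n in atTop, K * b n ≤ ρ Y n / ρ Set.univ n :=
      eventually_atTop.mpr ⟨2, fun n hn => (hmain n hn).1⟩
    calc ((4 * k - 4 : ℝ) / (2 * k - 1) ^ 2) * δ = K * δ := by rw [hgoalK]
      _ = Filter.liminf (fun n => K * b n) atTop := ht1.liminf_eq.symm
      _ ≤ Filter.liminf (fun n : ℕ => ρ Y n / ρ Set.univ n) atTop :=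
          liminf_le_liminf hev hco hbd
  · have ht2 : Tendsto (fun n => 1 - K * (1 - b n)) atTop (nhds (1 - K * (1 - δ))) := by
      have := ((tendsto_const_nhds (x := (1:ℝ)) (f := atTop)).sub hann).const_mul K
      exact (tendsto_const_nhds (x := (1:ℝ))).sub this
    have hco : IsCoboundedUnder (· ≤ ·) atTop (fun n : ℕ => ρ Y n / ρ Set.univ n) :=
      isCoboundedUnder_le_of_le atTop (x := 0) fun n =>
        div_nonneg (hρ0 Y n) (hρ0 Set.univ n)
    have hbd : IsBoundedUnder (· ≤ ·) atTop (fun n => 1 - K * (1 - b n)) :=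
      isBoundedUnder_of ⟨1, fun n => by
        have : 0 ≤ K * (1 - b n) := mul_nonneg hK0 (by linarith [hb1 n])
        linarith⟩
    have hev : ∀ᶠ n in atTop, ρ Y n / ρ Set.univ n ≤ 1 - K * (1 - b n) :=
      eventually_atTop.mpr ⟨2, fun n hn => (hmain n hn).2⟩
    calc Filter.limsup (fun n : ℕ => ρ Y n / ρ Set.univ n) atTop
        ≤ Filter.limsup (fun n => 1 - K * (1 - b n)) atTop := limsup_le_limsup hev hco hbd
      _ = 1 - K * (1 - δ) := ht2.limsup_eq
      _ = 1 - ((4 * k - 4 : ℝ) / (2 * k - 1) ^ 2) * (1 - δ) := by rw [hgoalK]
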